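/- The function ξ(x) = G(x/2)/G(1-x/2), where G(x) = ∏_{n≥0} (2/√3) sin(π a^n(x)/2) and a(x) = 1 - x/2, is continuously differentiable, strictly increasing, and a bijection from [0,1] onto [0,1]. -/

import Mathlib

open Real

namespace XiProof
open Set

noncomputable def AA (x : ℝ) : ℝ := 1 - x / 2
noncomputable def s0 (x : ℝ) : ℝ := 2 / Real.sqrt 3 * Real.sin (π * x / 2)
noncomputable def psi (t : ℝ) : ℝ := π / 2 * (Real.cos (π * t / 2) / Real.sin (π * t / 2))
noncomputable def ll (n : ℕ) (y : ℝ) : ℝ := Real.log (s0 (AA^[n] y))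
noncomputable def pp (n : ℕ) (y : ℝ) : ℝ := (-(1:ℝ)/2) ^ n * psi (AA^[n] y)
noncomputable def PP (y : ℝ) : ℝ := ∑' n, pp n y
noncomputable def FF (y : ℝ) : ℝ := ∑' n, ll n y
noncomputable def Xi (x : ℝ) : ℝ := s0 (x / 2) * Real.exp (FF (1 - x / 4) - FF (1 - x / 2))

def Jset : Set ℝ := Ioo (2/5) (11/10)
def Uset : Set ℝ := Ioo (-(1:ℝ)/6) (7/6)

lemma itAA (n : ℕ) (x : ℝ) : AA^[n] x = 2/3 + (-(1:ℝ)/2) ^ n * (x - 2/3) := by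
  induction n with
  | zero => simp
  | succ n ih =>
    rw [Function.iterate_succ_apply', ih, AA]
    ring

lemma sin_ge_half {θ : ℝ} (h1 : π/6 ≤ θ) (h2 : θ ≤ 5*π/6) : 1/2 ≤ Real.sin θ := by
  rcases le_total θ (π/2) with h | h
  · have := Real.sin_le_sin_of_le_of_le_pi_div_two (by linarith [Real.pi_pos]) h h1
    simpa [Real.sin_pi_div_six] using this
  · have h3 : π - θ ≤ π/2 := by linarith
    have h4 : π/6 ≤ π - θ := by linarith
    have := Real.sin_le_sin_of_le_of_le_pi_div_two (by linarith [Real.pi_pos]) h3 h4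
    rw [Real.sin_pi_sub] at this
    simpa [Real.sin_pi_div_six] using this

lemma sin_pos_of02 {t : ℝ} (h1 : 0 < t) (h2 : t < 2) : 0 < Real.sin (π * t / 2) := by
  apply Real.sin_pos_of_pos_of_lt_pi
  · positivity
  · nlinarith [Real.pi_pos]

lemma s0_pos {t : ℝ} (h1 : 0 < t) (h2 : t < 2) : 0 < s0 t := by
  have h3 : (0:ℝ) < Real.sqrt 3 := Real.sqrt_pos.2 (by norm_num)
  have := sin_pos_of02 h1 h2
  unfold s0; positivity

lemma psi_abs_le {t : ℝ} (h1 : 1/3 ≤ t) (h2 : t ≤ 11/10) : |psi t| ≤ 4 := by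
  have hpi := Real.pi_pos
  have hpil : π ≤ 3.15 := by linarith [Real.pi_lt_d2]
  have hs : 1/2 ≤ Real.sin (π * t / 2) := by
    apply sin_ge_half <;> nlinarith
  have hc : |Real.cos (π * t / 2)| ≤ 1 := Real.abs_cos_le_one _
  have hsp : 0 < Real.sin (π * t / 2) := by linarith
  have key : |Real.cos (π * t / 2) / Real.sin (π * t / 2)| ≤ 2 := by
    rw [abs_div, abs_of_pos hsp, div_le_iff₀ hsp]
    nlinarith
  calc |psi t| = π/2 * |Real.cos (π * t / 2) / Real.sin (π * t / 2)| := by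
        rw [psi, abs_mul, abs_of_pos (by positivity : (0:ℝ) < π/2)]
    _ ≤ π/2 * 2 := by nlinarith [abs_nonneg (Real.cos (π * t / 2) / Real.sin (π * t / 2))]
    _ ≤ 4 := by linarith

lemma psi_nonneg {t : ℝ} (h1 : 0 < t) (h2 : t ≤ 1) : 0 ≤ psi t := by
  have hpi := Real.pi_pos
  have hsp : 0 < Real.sin (π * t / 2) := sin_pos_of02 h1 (by linarith)
  have hc : 0 ≤ Real.cos (π * t / 2) := by
    apply Real.cos_nonneg_of_mem_Icc
    constructor <;> nlinarith
  rw [psi]; positivity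

lemma psi_anti {t u : ℝ} (ht : 0 < t) (htu : t ≤ u) (hu : u ≤ 1) : psi u ≤ psi t := by
  have hpi := Real.pi_pos
  have hst : 0 < Real.sin (π * t / 2) := sin_pos_of02 ht (by linarith)
  have hsu : 0 < Real.sin (π * u / 2) := sin_pos_of02 (by linarith) (by linarith)
  have hcu : 0 ≤ Real.cos (π * u / 2) := by
    apply Real.cos_nonneg_of_mem_Icc; constructor <;> nlinarith
  have hclele : Real.cos (π * u / 2) ≤ Real.cos (π * t / 2) := by
    apply Real.cos_le_cos_of_nonneg_of_le_pi <;> nlinarith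
  have hsle : Real.sin (π * t / 2) ≤ Real.sin (π * u / 2) := by
    apply Real.sin_le_sin_of_le_of_le_pi_div_two <;> nlinarith
  have key : Real.cos (π * u / 2) / Real.sin (π * u / 2) ≤ Real.cos (π * t / 2) / Real.sin (π * t / 2) := by
    rw [div_le_div_iff₀ hsu hst]
    nlinarith
  rw [psi, psi]
  nlinarith

lemma psi_anti_strict {t u : ℝ} (ht : 0 < t) (htu : t < u) (hu : u ≤ 1) : psi u < psi t := by
  have hpi := Real.pi_pos
  have hst : 0 < Real.sin (π * t / 2) := sin_pos_of02 ht (by linarith)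
  have hsu : 0 < Real.sin (π * u / 2) := sin_pos_of02 (by linarith) (by linarith)
  have hcu : 0 ≤ Real.cos (π * u / 2) := by
    apply Real.cos_nonneg_of_mem_Icc; constructor <;> nlinarith
  have hclele : Real.cos (π * u / 2) < Real.cos (π * t / 2) := by
    apply Real.cos_lt_cos_of_nonneg_of_le_pi <;> nlinarith
  have hsle : Real.sin (π * t / 2) ≤ Real.sin (π * u / 2) := by
    apply Real.sin_le_sin_of_le_of_le_pi_div_two <;> nlinarith
  have key : Real.cos (π * u / 2) / Real.sin (π * u / 2) < Real.cos (π * t / 2) / Real.sin (π * t / 2) := by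
    rw [div_lt_div_iff₀ hsu hst]
    nlinarith
  rw [psi, psi]
  nlinarith

lemma hasDerivAt_s0 (t : ℝ) : HasDerivAt s0 (2 / Real.sqrt 3 * (π / 2 * Real.cos (π * t / 2))) t := by
  have h1 : HasDerivAt (fun t : ℝ => π * t / 2) (π / 2) t := by
    simpa using ((hasDerivAt_id t).const_mul π).div_const 2
  have h2 : HasDerivAt (fun t : ℝ => Real.sin (π * t / 2)) (Real.cos (π * t / 2) * (π / 2)) t :=
    (Real.hasDerivAt_sin _).comp t h1
  have := h2.const_mul (2 / Real.sqrt 3)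
  refine this.congr_deriv ?_
  ring

lemma hasDerivAt_log_s0 {t : ℝ} (h1 : 0 < t) (h2 : t < 2) :
    HasDerivAt (fun t => Real.log (s0 t)) (psi t) t := by
  have hs := s0_pos h1 h2
  have h3 : (0:ℝ) < Real.sqrt 3 := Real.sqrt_pos.2 (by norm_num)
  have := (hasDerivAt_s0 t).log (ne_of_gt hs)
  convert this using 1
  have hsin : Real.sin (π * t / 2) ≠ 0 := ne_of_gt (sin_pos_of02 h1 h2)
  rw [psi, s0]
  field_simp

lemma s0_twothirds : s0 (2/3) = 1 := by
  have h3 : (0:ℝ) < Real.sqrt 3 := Real.sqrt_pos.2 (by norm_num)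
  have : π * (2/3) / 2 = π/3 := by ring
  rw [s0, this, Real.sin_pi_div_three]
  rw [div_mul_div_comm, div_eq_one_iff_eq (by positivity)]
  nlinarith [Real.sq_sqrt (by norm_num : (0:ℝ) ≤ 3)]

lemma log_s0_bound {t : ℝ} (h1 : 1/3 ≤ t) (h2 : t ≤ 11/10) :
    |Real.log (s0 t)| ≤ 4 * |t - 2/3| := by
  have key : ∀ x ∈ Icc (1/3 : ℝ) (11/10), HasDerivWithinAt (fun t => Real.log (s0 t)) (psi x) (Icc (1/3 : ℝ) (11/10)) x := by
    intro x hx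
    exact (hasDerivAt_log_s0 (by linarith [hx.1]) (by linarith [hx.2])).hasDerivWithinAt
  have bound : ∀ x ∈ Icc (1/3 : ℝ) (11/10), ‖psi x‖ ≤ 4 := by
    intro x hx
    exact psi_abs_le hx.1 hx.2
  have := Convex.norm_image_sub_le_of_norm_hasDerivWithin_le key bound (convex_Icc _ _)
    (⟨by norm_num, by norm_num⟩ : (2/3 : ℝ) ∈ Icc (1/3 : ℝ) (11/10)) ⟨h1, h2⟩
  rw [s0_twothirds] at this
  simpa [Real.norm_eq_abs, Real.log_one] using this

lemma mem_Ioc_it {y : ℝ} (hy : y ∈ Ioc (0:ℝ) 1) (n : ℕ) : AA^[n] y ∈ Ioc (0:ℝ) 1 := by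
  induction n with
  | zero => simpa using hy
  | succ n ih =>
    rw [Function.iterate_succ_apply']
    obtain ⟨h1, h2⟩ := ih
    constructor
    · simp only [AA]; linarith
    · simp only [AA]; linarith

lemma mem_third_it {y : ℝ} (hy : y ∈ Ioc (0:ℝ) 1) {n : ℕ} (hn : 1 ≤ n) :
    AA^[n] y ∈ Icc (1/3 : ℝ) 1 := by
  obtain ⟨h1, h2⟩ := hy
  have habs : |(-(1:ℝ)/2) ^ n * (y - 2/3)| ≤ 1/3 := by
    rw [abs_mul, abs_pow]
    have h3 : |(-(1:ℝ)/2)| = 1/2 := by norm_num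
    rw [h3]
    have h4 : |y - 2/3| ≤ 2/3 := by
      rw [abs_le]; constructor <;> linarith
    have h5 : ((1:ℝ)/2) ^ n ≤ 1/2 := by
      calc ((1:ℝ)/2) ^ n ≤ (1/2)^1 := by
            apply pow_le_pow_of_le_one (by norm_num) (by norm_num) hn
        _ = 1/2 := pow_one _
    calc ((1:ℝ)/2) ^ n * |y - 2/3| ≤ (1/2) * (2/3) := by
          apply mul_le_mul h5 h4 (abs_nonneg _) (by norm_num)
      _ = 1/3 := by norm_num
    
  rw [itAA]
  rw [abs_le] at habs
  constructor <;> linarith [habs.1, habs.2, mem_Ioc_it ⟨h1, h2⟩ n]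

lemma mem_J_it {y : ℝ} (hy : y ∈ Jset) (n : ℕ) : AA^[n] y ∈ Jset := by
  induction n with
  | zero => simpa using hy
  | succ n ih =>
    rw [Function.iterate_succ_apply']
    obtain ⟨h1, h2⟩ := ih
    constructor
    · simp only [AA]; norm_num; linarith
    · simp only [AA]; norm_num; linarith

lemma pp_zero (y : ℝ) : pp 0 y = psi y := by simp [pp]
lemma ll_zero (y : ℝ) : ll 0 y = Real.log (s0 y) := by simp [ll]

lemma pp_succ (n : ℕ) (y : ℝ) : pp (n+1) y = (-(1:ℝ)/2) * pp n (AA y) := by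
  rw [pp, pp, Function.iterate_succ_apply, pow_succ]
  ring

lemma ll_succ (n : ℕ) (y : ℝ) : ll (n+1) y = ll n (AA y) := by
  rw [ll, ll, Function.iterate_succ_apply]

lemma pp_bound_J {y : ℝ} (hy : y ∈ Jset) (n : ℕ) : |pp n y| ≤ 4 * (1/2)^n := by
  have hmem := mem_J_it hy n
  have := psi_abs_le (t := AA^[n] y) (by linarith [hmem.1]) (le_of_lt hmem.2)
  rw [pp, abs_mul, abs_pow]
  have h3 : |(-(1:ℝ)/2)| = 1/2 := by norm_num
  rw [h3]
  calc ((1:ℝ)/2)^n * |psi (AA^[n] y)| ≤ (1/2)^n * 4 := by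
        apply mul_le_mul_of_nonneg_left this (by positivity)
    _ = 4 * (1/2)^n := by ring

lemma ll_bound_J {y : ℝ} (hy : y ∈ Jset) (n : ℕ) : |ll n y| ≤ 2 * (1/2)^n := by
  have hmem := mem_J_it hy n
  have hb := log_s0_bound (t := AA^[n] y) (by linarith [hmem.1]) (le_of_lt hmem.2)
  rw [ll]
  have hd : |AA^[n] y - 2/3| = (1/2)^n * |y - 2/3| := by
    rw [itAA]
    have : (2:ℝ)/3 + (-(1:ℝ)/2) ^ n * (y - 2/3) - 2/3 = (-(1:ℝ)/2) ^ n * (y - 2/3) := by ring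
    rw [this, abs_mul, abs_pow, show |(-(1:ℝ)/2)| = 1/2 by norm_num]
  have hy23 : |y - 2/3| ≤ 1/2 := by
    obtain ⟨h1, h2⟩ := hy
    rw [abs_le]; constructor <;> (simp only [Jset, mem_Ioo] at *; linarith)
  calc |Real.log (s0 (AA^[n] y))| ≤ 4 * |AA^[n] y - 2/3| := hb
    _ = 4 * ((1/2)^n * |y - 2/3|) := by rw [hd]
    _ ≤ 4 * ((1/2)^n * (1/2)) := by
        apply mul_le_mul_of_nonneg_left _ (by norm_num)
        apply mul_le_mul_of_nonneg_left hy23 (by positivity)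
    _ = 2 * (1/2)^n := by ring

lemma summable_geom_aux (c : ℝ) : Summable (fun n : ℕ => c * (1/2)^n) :=
  (summable_geometric_of_lt_one (by norm_num) (by norm_num)).mul_left c

lemma summable_pp {y : ℝ} (hy : y ∈ Ioc (0:ℝ) 1) : Summable (fun n => pp n y) := by
  apply Summable.of_norm
  refine Summable.of_nonneg_of_le (fun n => norm_nonneg _) (fun n => ?_)
    (summable_geom_aux (max |psi y| 4))
  rcases Nat.eq_zero_or_pos n with h | h
  · subst h
    simp [pp, Real.norm_eq_abs, le_max_left]
  · have hmem := mem_third_it hy h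
    have := psi_abs_le (t := AA^[n] y) hmem.1 (by linarith [hmem.2])
    rw [Real.norm_eq_abs, pp, abs_mul, abs_pow]
    have h3 : |(-(1:ℝ)/2)| = 1/2 := by norm_num
    rw [h3]
    calc ((1:ℝ)/2)^n * |psi (AA^[n] y)| ≤ (1/2)^n * 4 := by
          apply mul_le_mul_of_nonneg_left this (by positivity)
      _ ≤ max |psi y| 4 * (1/2)^n := by
          rw [mul_comm]
          apply mul_le_mul_of_nonneg_right (le_max_right _ _) (by positivity)

lemma summable_ll {y : ℝ} (hy : y ∈ Ioc (0:ℝ) 1) : Summable (fun n => ll n y) := by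
  apply Summable.of_norm
  refine Summable.of_nonneg_of_le (fun n => norm_nonneg _) (fun n => ?_)
    (summable_geom_aux (max |Real.log (s0 y)| 4))
  rcases Nat.eq_zero_or_pos n with h | h
  · subst h
    simp [ll, Real.norm_eq_abs, le_max_left]
  · have hmem := mem_third_it hy h
    have hb := log_s0_bound (t := AA^[n] y) hmem.1 (by linarith [hmem.2])
    have hd : |AA^[n] y - 2/3| ≤ (1/2)^n := by
      rw [itAA]
      have : (2:ℝ)/3 + (-(1:ℝ)/2) ^ n * (y - 2/3) - 2/3 = (-(1:ℝ)/2) ^ n * (y - 2/3) := by ring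
      rw [this, abs_mul, abs_pow]
      have h3 : |(-(1:ℝ)/2)| = 1/2 := by norm_num
      rw [h3]
      have h4 : |y - 2/3| ≤ 1 := by
        obtain ⟨h1, h2⟩ := hy
        rw [abs_le]; constructor <;> linarith
      calc ((1:ℝ)/2)^n * |y - 2/3| ≤ (1/2)^n * 1 := by
            apply mul_le_mul_of_nonneg_left h4 (by positivity)
        _ = (1/2)^n := by ring
    rw [Real.norm_eq_abs, ll]
    calc |Real.log (s0 (AA^[n] y))| ≤ 4 * |AA^[n] y - 2/3| := hb
      _ ≤ 4 * (1/2)^n := by linarith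
      _ ≤ max |Real.log (s0 y)| 4 * (1/2)^n := by
          apply mul_le_mul_of_nonneg_right (le_max_right _ _) (by positivity)

lemma summable_ll_J {y : ℝ} (hy : y ∈ Jset) : Summable (fun n => ll n y) := by
  apply Summable.of_norm
  exact Summable.of_nonneg_of_le (fun n => norm_nonneg _) (fun n => ll_bound_J hy n) (summable_geom_aux 2)

lemma FF_shift {y : ℝ} (hy : y ∈ Ioc (0:ℝ) 1) : FF y = Real.log (s0 y) + FF (AA y) := by
  have h := summable_ll hy
  unfold FF
  rw [Summable.tsum_eq_zero_add h, ll_zero]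
  congr 1

lemma PP_shift {y : ℝ} (hy : y ∈ Ioc (0:ℝ) 1) : PP y = psi y + (-(1:ℝ)/2) * PP (AA y) := by
  have h := summable_pp hy
  have hA : AA y ∈ Ioc (0:ℝ) 1 := mem_Ioc_it hy 1
  unfold PP
  rw [Summable.tsum_eq_zero_add h, pp_zero]
  congr 1
  rw [← tsum_mul_left]
  exact tsum_congr fun n => pp_succ n y

lemma hasProd_exp {f : ℕ → ℝ} {x : ℝ} (h : HasSum f x) :
    HasProd (fun n => Real.exp (f n)) (Real.exp x) := by
  unfold HasProd
  unfold HasSum at h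
  have := (Real.continuous_exp.tendsto x).comp h
  exact this.congr fun s => by simp [Function.comp, Real.exp_sum]

lemma hasDerivAt_ll {y : ℝ} (hy : y ∈ Jset) (n : ℕ) : HasDerivAt (ll n) (pp n y) y := by
  have hfun : (ll n) = fun z => Real.log (s0 (2/3 + (-(1:ℝ)/2)^n * (z - 2/3))) := by
    funext z; rw [ll, itAA]
  rw [hfun]
  have hin : HasDerivAt (fun z : ℝ => 2/3 + (-(1:ℝ)/2)^n * (z - 2/3)) ((-(1:ℝ)/2)^n) y := by
    simpa using (((hasDerivAt_id y).sub_const (2/3)).const_mul ((-(1:ℝ)/2)^n)).const_add (2/3)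
  have hmem := mem_J_it hy n
  have hout := hasDerivAt_log_s0 (t := AA^[n] y)
    (by have := hmem.1; simp only [Jset, mem_Ioo] at *; linarith)
    (by have := hmem.2; simp only [Jset, mem_Ioo] at *; linarith)
  have hpt : 2/3 + (-(1:ℝ)/2)^n * (y - 2/3) = AA^[n] y := (itAA n y).symm
  rw [← hpt] at hout
  have := hout.comp y hin
  refine this.congr_deriv ?_
  · rw [pp, hpt]
    ring

lemma tuo_pp : TendstoUniformlyOn (fun N y => ∑ n ∈ Finset.range N, pp n y) PP Filter.atTop Jset := by
  have := tendstoUniformlyOn_tsum_nat (f := pp) (u := fun n => 4*(1/2)^n) (s := Jset)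
    (summable_geom_aux 4) (fun n y hy => by simpa [Real.norm_eq_abs] using pp_bound_J hy n)
  exact this

lemma Jset_open : IsOpen Jset := isOpen_Ioo

lemma hasDerivAt_FF {y : ℝ} (hy : y ∈ Jset) : HasDerivAt FF (PP y) y := by
  apply hasDerivAt_of_tendstoUniformlyOn Jset_open tuo_pp
    (Filter.Eventually.of_forall fun N x hx =>
      HasDerivAt.fun_sum fun n _ => hasDerivAt_ll hx n)
    (fun x hx => (summable_ll_J hx).hasSum.tendsto_sum_nat) hy

lemma continuousOn_pp (n : ℕ) : ContinuousOn (fun y => pp n y) Jset := by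
  have hg : Continuous (fun y : ℝ => AA^[n] y) := by
    have : (fun y : ℝ => AA^[n] y) = fun y => 2/3 + (-(1:ℝ)/2)^n * (y - 2/3) := funext (itAA n)
    rw [this]; fun_prop
  unfold pp psi
  apply ContinuousOn.mul continuousOn_const
  apply ContinuousOn.mul continuousOn_const
  apply ContinuousOn.div
  · exact (Real.continuous_cos.comp ((continuous_const.mul hg).div_const 2)).continuousOn
  · exact (Real.continuous_sin.comp ((continuous_const.mul hg).div_const 2)).continuousOn
  · intro y hy
    have hmem := mem_J_it hy n
    simp only [Jset, mem_Ioo] at hmem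
    exact ne_of_gt (sin_pos_of02 (by linarith [hmem.1]) (by linarith [hmem.2]))

lemma continuousOn_PP : ContinuousOn PP Jset :=
  tuo_pp.continuousOn (Filter.Eventually.of_forall fun N =>
    continuousOn_finset_sum _ fun n _ => continuousOn_pp n).frequently

lemma contDiffOn_FF : ContDiffOn ℝ 1 FF Jset := by
  rw [show (1:WithTop ℕ∞) = 0 + 1 from rfl, contDiffOn_succ_iff_deriv_of_isOpen Jset_open]
  refine ⟨fun y hy => (hasDerivAt_FF hy).differentiableAt.differentiableWithinAt, ?_, ?_⟩
  · intro h; exact absurd h (by simp)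
  · rw [contDiffOn_zero]
    exact continuousOn_PP.congr fun y hy => (hasDerivAt_FF hy).deriv

lemma maps1 : MapsTo (fun x : ℝ => 1 - x/4) Uset Jset := by
  intro x hx
  simp only [Uset, Jset, mem_Ioo] at *
  constructor <;> linarith [hx.1, hx.2]

lemma maps2 : MapsTo (fun x : ℝ => 1 - x/2) Uset Jset := by
  intro x hx
  simp only [Uset, Jset, mem_Ioo] at *
  constructor <;> linarith [hx.1, hx.2]

lemma contDiffOn_Xi : ContDiffOn ℝ 1 Xi Uset := by
  have hinner : ContDiff ℝ 1 (fun x : ℝ => π * (x/2) / 2) :=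
    (contDiff_const.mul (contDiff_id.div_const 2)).div_const 2
  have h1 : ContDiff ℝ 1 (fun x : ℝ => s0 (x/2)) := by
    unfold s0
    exact contDiff_const.mul ((Real.contDiff_sin.of_le le_top).comp hinner)
  have hg1 : ContDiff ℝ 1 (fun x : ℝ => 1 - x/4) := contDiff_const.sub (contDiff_id.div_const 4)
  have hg2 : ContDiff ℝ 1 (fun x : ℝ => 1 - x/2) := contDiff_const.sub (contDiff_id.div_const 2)
  have hF1 : ContDiffOn ℝ 1 (fun x => FF (1 - x/4)) Uset := by
    have := contDiffOn_FF.comp hg1.contDiffOn maps1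
    simpa [Function.comp_def] using this
  have hF2 : ContDiffOn ℝ 1 (fun x => FF (1 - x/2)) Uset := by
    have := contDiffOn_FF.comp hg2.contDiffOn maps2
    simpa [Function.comp_def] using this
  have hE : ContDiffOn ℝ 1 (fun x => Real.exp (FF (1 - x/4) - FF (1 - x/2))) Uset := by
    have := Real.contDiff_exp.comp_contDiffOn (hF1.sub hF2)
    simpa [Function.comp_def] using this
  exact (h1.contDiffOn).mul hE

noncomputable def XiD (x : ℝ) : ℝ :=
  2 / Real.sqrt 3 * (π / 2 * Real.cos (π * (x/2) / 2)) * (1/2) * Real.exp (FF (1 - x/4) - FF (1 - x/2))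
  + s0 (x/2) * (Real.exp (FF (1 - x/4) - FF (1 - x/2)) * (PP (1 - x/4) * (-(1/4)) - PP (1 - x/2) * (-(1/2))))

lemma hasDerivAt_Xi {x : ℝ} (hx : x ∈ Uset) : HasDerivAt Xi (XiD x) x := by
  have e1 : HasDerivAt (fun x : ℝ => 1 - x/4) (-(1/4) : ℝ) x := by
    simpa using ((hasDerivAt_id x).div_const 4).const_sub 1
  have e2 : HasDerivAt (fun x : ℝ => 1 - x/2) (-(1/2) : ℝ) x := by
    simpa using ((hasDerivAt_id x).div_const 2).const_sub 1
  have hF1 : HasDerivAt (fun x : ℝ => FF (1 - x/4)) (PP (1 - x/4) * (-(1/4))) x :=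
    by have := (hasDerivAt_FF (maps1 hx)).comp x e1; exact this
  have hF2 : HasDerivAt (fun x : ℝ => FF (1 - x/2)) (PP (1 - x/2) * (-(1/2))) x :=
    by have := (hasDerivAt_FF (maps2 hx)).comp x e2; exact this
  have hE := (hF1.sub hF2).exp
  have hs : HasDerivAt (fun x : ℝ => s0 (x/2))
      (2 / Real.sqrt 3 * (π / 2 * Real.cos (π * (x/2) / 2)) * (1/2)) x := by
    have hin : HasDerivAt (fun x : ℝ => x/2) ((1:ℝ)/2) x := by
      simpa using (hasDerivAt_id x).div_const 2
    have := (hasDerivAt_s0 (x/2)).comp x hin; exact this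
  have := hs.mul hE
  exact this.congr_deriv rfl

lemma PP_anti {u v : ℝ} (hu : u ∈ Ioc (0:ℝ) 1) (hv : v ∈ Ioc (0:ℝ) 1) (huv : u ≤ v) :
    PP v ≤ PP u := by
  apply Summable.tsum_le_tsum _ (summable_pp hv) (summable_pp hu)
  intro n
  rcases eq_or_lt_of_le huv with h | hlt
  · rw [h]
  · have hdiff : AA^[n] v - AA^[n] u = (-(1:ℝ)/2)^n * (v - u) := by rw [itAA, itAA]; ring
    have hmu := mem_Ioc_it hu n
    have hmv := mem_Ioc_it hv n
    rcases le_total (AA^[n] u) (AA^[n] v) with hle | hle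
    · have hc : 0 ≤ (-(1:ℝ)/2)^n := by nlinarith
      have hpsi : psi (AA^[n] v) ≤ psi (AA^[n] u) := psi_anti hmu.1 hle hmv.2
      unfold pp; nlinarith
    · have hc : (-(1:ℝ)/2)^n ≤ 0 := by nlinarith
      have hpsi : psi (AA^[n] u) ≤ psi (AA^[n] v) := psi_anti hmv.1 hle hmu.2
      unfold pp; nlinarith

lemma psi_one : psi 1 = 0 := by
  rw [psi, show π * 1 / 2 = π/2 by ring, Real.cos_pi_div_two]
  norm_num

set_option maxHeartbeats 1000000 in
lemma PP_half_pos : 0 < PP (1/2) := by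
  have hmem : (1/2 : ℝ) ∈ Ioc (0:ℝ) 1 := ⟨by norm_num, by norm_num⟩
  have hsum := summable_pp hmem
  have hsplit : PP (1/2) = psi (1/2) + ∑' n, pp (n+1) (1/2) := by
    unfold PP
    rw [Summable.tsum_eq_zero_add hsum, pp_zero]
  have hbd : ∀ n : ℕ, |pp (n+1) ((1:ℝ)/2)| ≤ psi (7/12) * (1/2)^(n+1) := by
    intro n
    have hit : AA^[n+1] ((1:ℝ)/2) = 2/3 + (-(1:ℝ)/2)^(n+1) * (1/2 - 2/3) := itAA (n+1) (1/2)
    have habs : |(-(1:ℝ)/2)^(n+1) * ((1:ℝ)/2 - 2/3)| ≤ 1/12 := by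
      rw [abs_mul, abs_pow, show |(-(1:ℝ)/2)| = 1/2 by norm_num]
      have h5 : ((1:ℝ)/2) ^ (n+1) ≤ 1/2 := by
        calc ((1:ℝ)/2) ^ (n+1) ≤ (1/2)^1 :=
              pow_le_pow_of_le_one (by norm_num) (by norm_num) (by omega)
          _ = 1/2 := pow_one _
      rw [show |(1:ℝ)/2 - 2/3| = 1/6 by norm_num]
      nlinarith
    rw [abs_le] at habs
    have hge : 7/12 ≤ AA^[n+1] ((1:ℝ)/2) := by rw [hit]; linarith [habs.1]
    have hle' : AA^[n+1] ((1:ℝ)/2) ≤ 3/4 := by rw [hit]; linarith [habs.2]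
    have hpnn : 0 ≤ psi (AA^[n+1] ((1:ℝ)/2)) := psi_nonneg (by linarith) (by linarith)
    have hple : psi (AA^[n+1] ((1:ℝ)/2)) ≤ psi (7/12) := psi_anti (by norm_num) hge (by linarith)
    rw [pp, abs_mul, abs_pow, show |(-(1:ℝ)/2)| = 1/2 by norm_num, abs_of_nonneg hpnn]
    calc ((1:ℝ)/2)^(n+1) * psi (AA^[n+1] ((1:ℝ)/2)) ≤ (1/2)^(n+1) * psi (7/12) := by
          apply mul_le_mul_of_nonneg_left hple (by positivity)
      _ = psi (7/12) * (1/2)^(n+1) := by ring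
  have hsumtail : Summable (fun n => pp (n+1) ((1:ℝ)/2)) := by
    exact (summable_nat_add_iff 1).2 hsum
  have hsumbd : Summable (fun n : ℕ => psi (7/12) * ((1:ℝ)/2)^(n+1)) := by
    have heq : (fun n : ℕ => psi (7/12) * ((1:ℝ)/2)^(n+1))
        = fun n : ℕ => (psi (7/12) * (1/2)) * ((1:ℝ)/2)^n := funext fun n => by ring
    rw [heq]; exact summable_geom_aux _
  have hT : |∑' n, pp (n+1) ((1:ℝ)/2)| ≤ psi (7/12) := by
    calc |∑' n, pp (n+1) ((1:ℝ)/2)| ≤ ∑' n, |pp (n+1) ((1:ℝ)/2)| := by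
          simpa [Real.norm_eq_abs] using
            norm_tsum_le_tsum_norm (f := fun n => pp (n+1) ((1:ℝ)/2))
              (by simpa [Real.norm_eq_abs] using hsumtail.abs)
      _ ≤ ∑' n : ℕ, psi (7/12) * ((1:ℝ)/2)^(n+1) := Summable.tsum_le_tsum hbd hsumtail.abs hsumbd
      _ = psi (7/12) := by
          have : ∑' n : ℕ, psi (7/12) * ((1:ℝ)/2)^(n+1) = psi (7/12) * (1/2) * ∑' n : ℕ, ((1:ℝ)/2)^n := by
            rw [← tsum_mul_left]
            congr 1; funext n; ring
          rw [this, tsum_geometric_of_lt_one (by norm_num) (by norm_num)]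
          ring
  have hstrict : psi (7/12) < psi (1/2) := psi_anti_strict (by norm_num) (by norm_num) (by norm_num)
  rw [hsplit]
  have := abs_le.1 hT
  linarith [this.1]

set_option maxHeartbeats 1000000 in
lemma XiD_pos {x : ℝ} (hx : x ∈ Ioo (0:ℝ) 1) : 0 < XiD x := by
  obtain ⟨hx0, hx1⟩ := hx
  have hx2 : x/2 ∈ Ioc (0:ℝ) 1 := ⟨by linarith, by linarith⟩
  have h1x2 : 1 - x/2 ∈ Ioc (0:ℝ) 1 := ⟨by linarith, by linarith⟩
  have hs0x : 0 < s0 (x/2) := s0_pos (by linarith) (by linarith)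
  have hexp : 0 < Real.exp (FF (1 - x/4) - FF (1 - x/2)) := Real.exp_pos _
  have hsin : 0 < Real.sin (π * (x/2) / 2) := sin_pos_of02 (by linarith) (by linarith)
  have hfac : 2 / Real.sqrt 3 * (π / 2 * Real.cos (π * (x/2) / 2)) = s0 (x/2) * psi (x/2) := by
    have h3 : Real.sqrt 3 ≠ 0 := ne_of_gt (Real.sqrt_pos.2 (by norm_num))
    have hsin' : Real.sin (π * (x/2) / 2) ≠ 0 := ne_of_gt hsin
    have hsin2 : Real.sin (π * x * (1/4)) ≠ 0 := by
      rw [show π * x * (1/4) = π * (x/2) / 2 by ring]; exact hsin'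
    rw [s0, psi]
    field_simp
    have hne : Real.sqrt 3 * (2 * Real.sin (π * x / (2*2))) ≠ 0 := by
      apply mul_ne_zero h3
      apply mul_ne_zero two_ne_zero
      rw [show π * x / (2*2) = π * (x/2) / 2 by ring]
      exact hsin'
    rw [mul_div_cancel_right₀ _ (by rw [show π * x / 2 ^ 2 = π * (x/2) / 2 by ring]; exact hsin')]
  have hAx : AA (x/2) = 1 - x/4 := by unfold AA; ring
  have hshift := PP_shift hx2
  rw [hAx] at hshift
  have hA1 : AA 1 = 1/2 := by unfold AA; norm_num
  have hP1 := PP_shift (y := 1) ⟨zero_lt_one, le_refl 1⟩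
  rw [hA1, psi_one] at hP1
  have hm1 : PP (1/2) ≤ PP (x/2) := PP_anti hx2 ⟨by norm_num, by norm_num⟩ (by linarith)
  have hm2 : PP 1 ≤ PP (1 - x/2) := PP_anti h1x2 ⟨zero_lt_one, le_refl 1⟩ (by linarith)
  have hhalf := PP_half_pos
  have hB : 0 < psi (x/2) * (1/2) + (PP (1 - x/4) * (-(1/4)) - PP (1 - x/2) * (-(1/2))) := by
    linarith [hshift, hP1, hm1, hm2, hhalf]
  have hXiD : XiD x = Real.exp (FF (1 - x/4) - FF (1 - x/2)) * (s0 (x/2) *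
      (psi (x/2) * (1/2) + (PP (1 - x/4) * (-(1/4)) - PP (1 - x/2) * (-(1/2))))) := by
    rw [XiD, hfac]
    ring
  rw [hXiD]
  exact mul_pos hexp (mul_pos hs0x hB)

lemma Icc_sub_Uset : Icc (0:ℝ) 1 ⊆ Uset := by
  intro x hx
  simp only [Uset, mem_Ioo]
  constructor <;> linarith [hx.1, hx.2]

end XiProof

open XiProof Set

/-- ξ(x) = G(x/2)/G(1-x/2), with G(x) = ∏_{n≥0} (2/√3) sin(π a^n(x)/2) (and G(0)=0),
    a(x) = 1 - x/2, is C¹, strictly increasing, and a bijection of [0,1] onto [0,1]. -/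
theorem xi_C1_increasing_bijective
    (a S G ξ : ℝ → ℝ)
    (ha : ∀ x, a x = 1 - x / 2)
    (hS : ∀ x, S x = 2 / Real.sqrt 3 * Real.sin (π * x / 2))
    (hG0 : G 0 = 0)
    (hG : ∀ x ∈ Set.Ioc (0 : ℝ) 1, G x = ∏' n : ℕ, S (a^[n] x))
    (hξ : ∀ x ∈ Set.Icc (0 : ℝ) 1, ξ x = G (x / 2) / G (1 - x / 2)) :
    ContDiffOn ℝ 1 ξ (Set.Icc 0 1) ∧
    StrictMonoOn ξ (Set.Icc 0 1) ∧
    Set.BijOn ξ (Set.Icc 0 1) (Set.Icc 0 1) := by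
  have hGeq : ∀ y ∈ Ioc (0:ℝ) 1, G y = Real.exp (FF y) := by
    intro y hy
    rw [hG y hy]
    have haA : a = AA := funext fun x => by rw [ha]; rfl
    have hSs : S = s0 := funext fun x => by rw [hS]; rfl
    rw [haA, hSs]
    have h1 : ∀ n : ℕ, s0 (AA^[n] y) = Real.exp (ll n y) := fun n => by
      rw [ll, Real.exp_log (s0_pos (mem_Ioc_it hy n).1 (by linarith [(mem_Ioc_it hy n).2]))]
    have h2 : HasProd (fun n => s0 (AA^[n] y)) (Real.exp (FF y)) := by
      rw [show (fun n => s0 (AA^[n] y)) = fun n => Real.exp (ll n y) from funext h1]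
      exact hasProd_exp (summable_ll hy).hasSum
    exact h2.tprod_eq
  have hXieq : ∀ x ∈ Icc (0:ℝ) 1, ξ x = Xi x := by
    intro x hx
    obtain ⟨hx0, hx1⟩ := hx
    rcases eq_or_lt_of_le hx0 with h | h
    · rw [← h]
      have h0 : ξ 0 = G (0/2) / G (1 - 0/2) := hξ 0 ⟨le_refl 0, zero_le_one⟩
      rw [show (0:ℝ)/2 = 0 by norm_num] at h0
      rw [h0, hG0, zero_div]
      rw [Xi, s0]
      norm_num
    · have hx2 : x/2 ∈ Ioc (0:ℝ) 1 := ⟨by linarith, by linarith⟩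
      have h1x2 : 1 - x/2 ∈ Ioc (0:ℝ) 1 := ⟨by linarith, by linarith⟩
      rw [hξ x ⟨hx0, hx1⟩, hGeq _ hx2, hGeq _ h1x2, FF_shift hx2]
      have hAx : AA (x/2) = 1 - x/4 := by unfold AA; ring
      rw [hAx, Xi, Real.exp_add, Real.exp_log (s0_pos (by linarith) (by linarith)),
        Real.exp_sub]
      field_simp
  have part1 : ContDiffOn ℝ 1 ξ (Icc 0 1) :=
    (contDiffOn_Xi.mono Icc_sub_Uset).congr fun x hx => hXieq x hx
  have hderiv : ∀ x ∈ Ioo (0:ℝ) 1, 0 < deriv ξ x := by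
    intro x hx
    have hU : x ∈ Uset := Icc_sub_Uset (Ioo_subset_Icc_self hx)
    have hXd := hasDerivAt_Xi hU
    have hee : ξ =ᶠ[nhds x] Xi := by
      filter_upwards [Icc_mem_nhds hx.1 hx.2] with z hz using hXieq z hz
    rw [hee.deriv_eq, hXd.deriv]
    exact XiD_pos hx
  have part2 : StrictMonoOn ξ (Icc 0 1) :=
    strictMonoOn_of_deriv_pos (convex_Icc 0 1) part1.continuousOn
      (fun x hx => hderiv x (by rwa [interior_Icc] at hx))
  have hG12 : G (1/2) = Real.exp (FF (1/2)) := hGeq _ ⟨by norm_num, by norm_num⟩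
  have hxi0 : ξ 0 = 0 := by
    have h0 : ξ 0 = G (0/2) / G (1 - 0/2) := hξ 0 ⟨le_refl 0, zero_le_one⟩
    rw [show (0:ℝ)/2 = 0 by norm_num] at h0
    rw [h0, hG0, zero_div]
  have hxi1 : ξ 1 = 1 := by
    have h0 : ξ 1 = G (1/2) / G (1 - 1/2) := hξ 1 ⟨zero_le_one, le_refl 1⟩
    rw [show (1:ℝ) - 1/2 = 1/2 by norm_num] at h0
    rw [h0, hG12, div_self (Real.exp_ne_zero _)]
  have hmapsTo : MapsTo ξ (Icc (0:ℝ) 1) (Icc (0:ℝ) 1) := by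
    intro x hx
    have h0mem : (0:ℝ) ∈ Icc (0:ℝ) 1 := ⟨le_refl 0, zero_le_one⟩
    have h1mem : (1:ℝ) ∈ Icc (0:ℝ) 1 := ⟨zero_le_one, le_refl 1⟩
    constructor
    · rw [← hxi0]
      exact part2.monotoneOn h0mem hx hx.1
    · rw [← hxi1]
      exact part2.monotoneOn hx h1mem hx.2
  have hsurj : SurjOn ξ (Icc (0:ℝ) 1) (Icc (0:ℝ) 1) := by
    have := intermediate_value_Icc (zero_le_one) part1.continuousOn
    rw [hxi0, hxi1] at this
    exact this
  exact ⟨part1, part2, hmapsTo, part2.injOn, hsurj⟩
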